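/- Let Φ be a unital commutative ring which is 2-torsion free and 3-torsion free, and let Q = ⊕_{σ∈G} Q_σ be a G-graded Lie algebra over Φ which is a graded weak algebra of quotients of a graded subalgebra L. If L is graded strongly nondegenerate, then Q is graded strongly nondegenerate. -/

import Mathlib

set_option maxHeartbeats 3200000
set_option maxRecDepth 16384

open LieAlgebra

private lemma keyA {R : Type*} [Ring R] (D X A1 A2 A3 A4 Zb : R)
    (hA1 : A1 = X * D - D * X)
    (hA2 : A2 = X * A1 - A1 * X)
    (hA3 : A3 = X * A2 - A2 * X)
    (hA4 : A4 = X * A3 - A3 * X)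
    (hZb : Zb = A1 * (A1 * X - X * A1) - (A1 * X - X * A1) * A1) :
    (2 : ℤ) • (Zb * Zb) =
      (2 : ℤ) • ((D * X * D * X * X) * (D * X * D) * (X * X)) +
      (8 : ℤ) • ((D * X * D * X * X * X) * (D * X * D) * (X)) +
      (2 : ℤ) • ((D * X * D * X * X * X * X) * (D * X * D)) +
      (-6 : ℤ) • ((D * X * X * D * X) * (D * X * D) * (X * X)) +
      (-24 : ℤ) • ((D * X * X * D * X * X) * (D * X * D) * (X)) +
      (6 : ℤ) • ((D * X * X * D * X * X * X) * (D * X * D)) +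
      (16 : ℤ) • ((D * X * X * X * D * X) * (D * X * D) * (X)) +
      (4 : ℤ) • ((D * X * X * X * D * X * X) * (D * X * D)) +
      (18 : ℤ) • ((D * X * X) * (D * X * D) * (X * X * D * X)) +
      (-12 : ℤ) • ((D * X * X * X) * (D * X * D) * (X * X * D)) +
      (8 : ℤ) • ((X * D * X * D * X) * (D * X * D) * (X * X)) +
      (32 : ℤ) • ((X * D * X * D * X * X) * (D * X * D) * (X)) +
      (8 : ℤ) • ((X * D * X * D * X * X * X) * (D * X * D)) +
      (-24 : ℤ) • ((X * D * X * X * D * X) * (D * X * D) * (X)) +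
      (-6 : ℤ) • ((X * D * X * X * D * X * X) * (D * X * D)) +
      (-24 : ℤ) • ((X * D * X) * (D * X * D) * (X * X * D * X)) +
      (16 : ℤ) • ((X * D * X) * (D * X * D) * (X * X * X * D)) +
      (18 : ℤ) • ((X * D * X * X) * (D * X * D) * (X * X * D)) +
      (8 : ℤ) • ((X * X * D * X * D * X) * (D * X * D) * (X)) +
      (2 : ℤ) • ((X * X * D * X * D * X * X) * (D * X * D)) +
      (-6 : ℤ) • ((D * X * D) * (X * X * D * X * X * D * X)) +
      (4 : ℤ) • ((D * X * D) * (X * X * D * X * X * X * D)) +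
      (-6 : ℤ) • ((X * X * D * X) * (D * X * D) * (X * X * D)) +
      (-6 : ℤ) • ((D * X * D) * (X * X * X * D * X * X * D)) +
      (-24 : ℤ) • ((X) * (D * X * D) * (X * X * D * X * X * D)) +
      (3 : ℤ) • ((D * X * X) * (D * A4 * D)) +
      (-2 : ℤ) • ((D * X * D * X * X * X) * (D * D) * (X * X)) +
      (-2 : ℤ) • ((D * X * D * X * X * X * X) * (D * D) * (X)) +
      (-3 : ℤ) • ((D * X * X) * (D * D) * (X * X * X * X * D)) +
      (6 : ℤ) • ((D * X * X * D * X * X) * (D * D) * (X * X)) +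
      (6 : ℤ) • ((D * X * X * D * X * X * X) * (D * D) * (X)) +
      (-3 : ℤ) • ((D * X * X * D * X * X * X * X) * (D * D)) +
      (4 : ℤ) • ((D * X * X * X) * (D * D) * (X * D * X * X)) +
      (-12 : ℤ) • ((D * X * X * X) * (D * D) * (X * X * D * X)) +
      (8 : ℤ) • ((D * X * X * X) * (D * D) * (X * X * X * D)) +
      (-4 : ℤ) • ((D * X * X * X * D * X) * (D * D) * (X * X)) +
      (-4 : ℤ) • ((D * X * X * X * D * X * X) * (D * D) * (X)) +
      (-2 : ℤ) • ((X) * (D * D) * (X * X * D * X * D * X * X)) +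
      (6 : ℤ) • ((X) * (D * D) * (X * X * D * X * X * D * X)) +
      (-4 : ℤ) • ((X) * (D * D) * (X * X * D * X * X * X * D)) +
      (2 : ℤ) • ((X) * (D * D) * (X * X * X * D * D * X * X)) +
      (-8 : ℤ) • ((X) * (D * D) * (X * X * X * D * X * D * X)) +
      (6 : ℤ) • ((X) * (D * D) * (X * X * X * D * X * X * D)) +
      (2 : ℤ) • ((X) * (D * D) * (X * X * X * X * D * D * X)) +
      (-2 : ℤ) • ((X) * (D * D) * (X * X * X * X * D * X * D)) +
      (-8 : ℤ) • ((X * D * X * D * X * X) * (D * D) * (X * X)) +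
      (-8 : ℤ) • ((X * D * X * D * X * X * X) * (D * D) * (X)) +
      (-6 : ℤ) • ((X * D * X * X) * (D * D) * (X * D * X * X)) +
      (18 : ℤ) • ((X * D * X * X) * (D * D) * (X * X * D * X)) +
      (-12 : ℤ) • ((X * D * X * X) * (D * D) * (X * X * X * D)) +
      (6 : ℤ) • ((X * D * X * X * D * X) * (D * D) * (X * X)) +
      (6 : ℤ) • ((X * D * X * X * D * X * X) * (D * D) * (X)) +
      (-2 : ℤ) • ((X * X) * (D * D) * (X * D * X * D * X * X)) +
      (6 : ℤ) • ((X * X) * (D * D) * (X * D * X * X * D * X)) +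
      (-4 : ℤ) • ((X * X) * (D * D) * (X * D * X * X * X * D)) +
      (2 : ℤ) • ((X * X) * (D * D) * (X * X * D * D * X * X)) +
      (-8 : ℤ) • ((X * X) * (D * D) * (X * X * D * X * D * X)) +
      (6 : ℤ) • ((X * X) * (D * D) * (X * X * D * X * X * D)) +
      (2 : ℤ) • ((X * X) * (D * D) * (X * X * X * D * D * X)) +
      (-2 : ℤ) • ((X * X) * (D * D) * (X * X * X * D * X * D)) +
      (2 : ℤ) • ((X * X * D * X) * (D * D) * (X * D * X * X)) +
      (-6 : ℤ) • ((X * X * D * X) * (D * D) * (X * X * D * X)) +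
      (4 : ℤ) • ((X * X * D * X) * (D * D) * (X * X * X * D)) +
      (-2 : ℤ) • ((X * X * D * X * D * X) * (D * D) * (X * X)) +
      (-2 : ℤ) • ((X * X * D * X * D * X * X) * (D * D) * (X)) := by
  subst hZb hA4 hA3 hA2 hA1
  noncomm_ring

private lemma keyB {R : Type*} [Ring R] (D X Y A1 A2 A3 A4 B4 D1 D2 YX adb Z : R)
    (hA1 : A1 = X * D - D * X)
    (hA2 : A2 = X * A1 - A1 * X)
    (hA3 : A3 = X * A2 - A2 * X)
    (hA4 : A4 = X * A3 - A3 * X)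
    (hB4 : B4 = Y * A3 - A3 * Y)
    (hD1 : D1 = Y * A2 - A2 * Y)
    (hD2 : D2 = Y * D1 - D1 * Y)
    (hYX : YX = Y * X - X * Y)
    (hadb : adb = A1 * (A1 * X - X * A1) - (A1 * X - X * A1) * A1)
    (hZ : Z = A1 * (A1 * Y - Y * A1) - (A1 * Y - Y * A1) * A1) :
    (6 : ℤ) • (Z * Z) =
      (6 : ℤ) • ((D * X * D * X * Y) * (D * X * D) * (X * Y)) +
      (6 : ℤ) • ((D * X * D * X * Y * X) * (D * X * D) * (Y)) +
      (6 : ℤ) • ((D * X * D * X * Y * Y) * (D * X * D) * (X)) +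
      (6 : ℤ) • ((D * X * D * X * Y * Y * X) * (D * X * D)) +
      (-6 : ℤ) • ((D * X * X * D * Y) * (D * X * D) * (X * Y)) +
      (-6 : ℤ) • ((D * X * X * D * Y * X) * (D * X * D) * (Y)) +
      (-6 : ℤ) • ((D * X * X * D * Y * Y) * (D * X * D) * (X)) +
      (-6 : ℤ) • ((D * X * X * D * Y * Y * X) * (D * X * D)) +
      (-12 : ℤ) • ((D * X * Y * D * X) * (D * X * D) * (X * Y)) +
      (-12 : ℤ) • ((D * X * Y * D * X * X) * (D * X * D) * (Y)) +
      (-12 : ℤ) • ((D * X * Y * D * X * Y) * (D * X * D) * (X)) +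
      (-12 : ℤ) • ((D * X * Y * D * X * Y * X) * (D * X * D)) +
      (12 : ℤ) • ((D * X * Y * X * D * X) * (D * X * D) * (Y)) +
      (12 : ℤ) • ((D * X * Y * X * D * Y) * (D * X * D) * (X)) +
      (12 : ℤ) • ((D * X * Y * X * D * Y * X) * (D * X * D)) +
      (12 : ℤ) • ((D * X * Y) * (D * X * D) * (X * X * D * Y)) +
      (24 : ℤ) • ((D * X * Y) * (D * X * D) * (X * Y * D * X)) +
      (24 : ℤ) • ((D * X * Y * X) * (D * X * D) * (Y * D * X)) +
      (-24 : ℤ) • ((D * X * Y) * (D * X * D) * (X * Y * X * D)) +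
      (-24 : ℤ) • ((D * X * Y * X) * (D * X * D) * (Y * X * D)) +
      (6 : ℤ) • ((X * D * X * D * Y) * (D * X * D) * (X * Y)) +
      (6 : ℤ) • ((X * D * X * D * Y * X) * (D * X * D) * (Y)) +
      (6 : ℤ) • ((X * D * X * D * Y * Y) * (D * X * D) * (X)) +
      (6 : ℤ) • ((X * D * X * D * Y * Y * X) * (D * X * D)) +
      (12 : ℤ) • ((X * D * Y * D * X) * (D * X * D) * (X * Y)) +
      (12 : ℤ) • ((X * D * Y * D * X * X) * (D * X * D) * (Y)) +
      (12 : ℤ) • ((X * D * Y * D * X * Y) * (D * X * D) * (X)) +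
      (12 : ℤ) • ((X * D * Y * D * X * Y * X) * (D * X * D)) +
      (-12 : ℤ) • ((X * D * Y * X * D * X) * (D * X * D) * (Y)) +
      (-12 : ℤ) • ((X * D * Y * X * D * Y) * (D * X * D) * (X)) +
      (-12 : ℤ) • ((X * D * Y * X * D * Y * X) * (D * X * D)) +
      (-12 : ℤ) • ((X * D * Y) * (D * X * D) * (X * X * D * Y)) +
      (-24 : ℤ) • ((X * D * Y) * (D * X * D) * (X * Y * D * X)) +
      (-24 : ℤ) • ((X * D * Y * X) * (D * X * D) * (Y * D * X)) +
      (24 : ℤ) • ((X * D * Y) * (D * X * D) * (X * Y * X * D)) +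
      (24 : ℤ) • ((X * D * Y * X) * (D * X * D) * (Y * X * D)) +
      (-6 : ℤ) • ((D * X * D) * (X * Y * D * X * X * D * Y)) +
      (-6 : ℤ) • ((X) * (D * X * D) * (Y * D * X * X * D * Y)) +
      (-12 : ℤ) • ((D * X * D) * (X * Y * D * X * Y * D * X)) +
      (-12 : ℤ) • ((X) * (D * X * D) * (Y * D * X * Y * D * X)) +
      (12 : ℤ) • ((D * X * D) * (X * Y * D * X * Y * X * D)) +
      (12 : ℤ) • ((X) * (D * X * D) * (Y * D * X * Y * X * D)) +
      (12 : ℤ) • ((D * X * D) * (X * Y * X * D * Y * D * X)) +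
      (12 : ℤ) • ((X) * (D * X * D) * (Y * X * D * Y * D * X)) +
      (-12 : ℤ) • ((D * X * D) * (X * Y * X * D * Y * X * D)) +
      (-12 : ℤ) • ((X) * (D * X * D) * (Y * X * D * Y * X * D)) +
      (6 : ℤ) • ((D * X * D) * (X * Y * Y * D * X * X * D)) +
      (-6 : ℤ) • ((X) * (D * X * D) * (Y * Y * D * X * X * D)) +
      (6 : ℤ) • ((Y * D * X * D * X) * (D * X * D) * (X * Y)) +
      (6 : ℤ) • ((Y * D * X * D * X * X) * (D * X * D) * (Y)) +
      (6 : ℤ) • ((Y * D * X * D * X * Y) * (D * X * D) * (X)) +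
      (6 : ℤ) • ((Y * D * X * D * X * Y * X) * (D * X * D)) +
      (-6 : ℤ) • ((Y * D * X * X * D * X) * (D * X * D) * (Y)) +
      (-6 : ℤ) • ((Y * D * X * X * D * Y) * (D * X * D) * (X)) +
      (-6 : ℤ) • ((Y * D * X * X * D * Y * X) * (D * X * D)) +
      (-6 : ℤ) • ((Y * D * X) * (D * X * D) * (X * X * D * Y)) +
      (-12 : ℤ) • ((Y * D * X) * (D * X * D) * (X * Y * D * X)) +
      (-12 : ℤ) • ((Y * D * X * X) * (D * X * D) * (Y * D * X)) +
      (12 : ℤ) • ((Y * D * X) * (D * X * D) * (X * Y * X * D)) +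
      (12 : ℤ) • ((Y * D * X * X) * (D * X * D) * (Y * X * D)) +
      (6 : ℤ) • ((Y * X * D * X * D * X) * (D * X * D) * (Y)) +
      (6 : ℤ) • ((Y * X * D * X * D * Y) * (D * X * D) * (X)) +
      (6 : ℤ) • ((Y * X * D * X * D * Y * X) * (D * X * D)) +
      (12 : ℤ) • ((Y * X * D * X) * (D * X * D) * (Y * D * X)) +
      (-12 : ℤ) • ((Y * X * D * X) * (D * X * D) * (Y * X * D)) +
      (12 : ℤ) • ((Y) * (D * X * D) * (X * X * D * Y * D * X)) +
      (-12 : ℤ) • ((Y) * (D * X * D) * (X * X * D * Y * X * D)) +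
      (-6 : ℤ) • ((Y) * (D * X * D) * (X * Y * D * X * X * D)) +
      (-6 : ℤ) • ((Y * X) * (D * X * D) * (Y * D * X * X * D)) +
      (-12 : ℤ) • ((D * X * X * D * Y * X) * (D * Y * D) * (X)) +
      (6 : ℤ) • ((D * X * X) * (D * Y * D) * (X * X * D * Y)) +
      (12 : ℤ) • ((D * X * X) * (D * Y * D) * (X * Y * D * X)) +
      (-12 : ℤ) • ((D * X * X) * (D * Y * D) * (X * Y * X * D)) +
      (-24 : ℤ) • ((D * X * Y * D * X * X) * (D * Y * D) * (X)) +
      (-12 : ℤ) • ((D * X * Y * X) * (D * Y * D) * (X * X * D)) +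
      (24 : ℤ) • ((X * D * Y * D * X * X) * (D * Y * D) * (X)) +
      (12 : ℤ) • ((X * D * Y * X) * (D * Y * D) * (X * X * D)) +
      (-24 : ℤ) • ((X) * (D * Y * D) * (X * X * D * Y * X * D)) +
      (-12 : ℤ) • ((X) * (D * Y * D) * (X * Y * D * X * X * D)) +
      (6 : ℤ) • ((Y * D * X * X) * (D * Y * D) * (X * X * D)) +
      (24 : ℤ) • ((D * X * Y * D * X * X) * (D * YX * D)) +
      (6 : ℤ) • ((D * D2 * D) * (X * X * D)) +
      (12 : ℤ) • ((D * Y * Y * X) * (D * X * D) * (X * X * D)) +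
      (12 : ℤ) • ((D * Y * X * X) * (D * Y * D) * (X * X * D)) +
      (12 : ℤ) • ((D * Y * D) * (X * X * Y * D * X * X * D)) +
      (4 : ℤ) • ((D * X * Y) * (D * B4 * D)) +
      (4 : ℤ) • ((D * X * Y * D * Y * X * X) * (D * X * D)) +
      (12 : ℤ) • ((D * X * Y) * (D * X * D) * (X * X * Y * D)) +
      (4 : ℤ) • ((D * X * Y * D * X * X * X) * (D * Y * D)) +
      (-12 : ℤ) • ((D * X * Y) * (D * Y * D) * (X * X * X * D)) +
      (12 : ℤ) • ((D * X * Y) * (D * YX * D) * (X * X * D)) +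
      (4 : ℤ) • ((D * B4 * D) * (X * Y * D)) +
      (12 : ℤ) • ((D * Y * X * X) * (D * X * D) * (X * Y * D)) +
      (12 : ℤ) • ((D * X * D) * (X * X * Y * D * X * Y * D)) +
      (4 : ℤ) • ((D * X * X * X) * (D * Y * D) * (X * Y * D)) +
      (4 : ℤ) • ((D * Y * D) * (X * X * X * D * X * Y * D)) +
      (12 : ℤ) • ((D * X * X) * (D * YX * D) * (X * Y * D)) +
      (12 : ℤ) • ((D * X * X * D * Y * X) * (D * YX * D)) +
      (-12 : ℤ) • ((D * YX * D) * (X * X * D * X * Y * D)) +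
      (-1 : ℤ) • ((D * Y * Y) * (D * A4 * D)) +
      (-4 : ℤ) • ((D * Y * Y * D * X * X * X) * (D * X * D)) +
      (-4 : ℤ) • ((D * Y * Y) * (D * X * D) * (X * X * X * D)) +
      (8 : ℤ) • ((D * X * Y * D * Y) * adb) +
      (-8 : ℤ) • ((D * X * Y * D * Y) * (D * X * D) * (X * X)) +
      (-32 : ℤ) • ((D * X * Y * D * Y * X) * (D * X * D) * (X)) +
      (24 : ℤ) • ((D * X * Y) * (D * Y * D) * (X * X * D * X)) +
      (-24 : ℤ) • ((D * YX * D) * (X * Y * D * X * X * D)) +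
      (-4 : ℤ) • ((D * D) * (X * X * X * Y * D * X * Y * D)) +
      (-6 : ℤ) • ((D * D) * (X * X * Y * Y * D * X * X * D)) +
      (-6 : ℤ) • ((D * X * D * X * Y * X) * (D * D) * (X * Y)) +
      (-6 : ℤ) • ((D * X * D * X * Y * Y * X) * (D * D) * (X)) +
      (6 : ℤ) • ((D * X * X * D * Y * X) * (D * D) * (X * Y)) +
      (6 : ℤ) • ((D * X * X * D * Y * Y * X) * (D * D) * (X)) +
      (-4 : ℤ) • ((D * X * Y) * (D * D) * (X * X * X * Y * D)) +
      (12 : ℤ) • ((D * X * Y * D * X * X) * (D * D) * (X * Y)) +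
      (12 : ℤ) • ((D * X * Y * D * X * Y * X) * (D * D) * (X)) +
      (8 : ℤ) • ((D * X * Y * D * Y * X) * (D * D) * (X * X)) +
      (8 : ℤ) • ((D * X * Y * D * Y * X * X) * (D * D) * (X)) +
      (-4 : ℤ) • ((D * X * Y * D * Y * X * X * X) * (D * D)) +
      (12 : ℤ) • ((D * X * Y * X) * (D * D) * (X * D * X * Y)) +
      (-12 : ℤ) • ((D * X * Y * X) * (D * D) * (X * X * D * Y)) +
      (-24 : ℤ) • ((D * X * Y * X) * (D * D) * (X * Y * D * X)) +
      (24 : ℤ) • ((D * X * Y * X) * (D * D) * (X * Y * X * D)) +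
      (-12 : ℤ) • ((D * X * Y * X * D * X) * (D * D) * (X * Y)) +
      (-12 : ℤ) • ((D * X * Y * X * D * Y * X) * (D * D) * (X)) +
      (-4 : ℤ) • ((D * Y * X * X * X) * (D * D) * (X * Y * D)) +
      (1 : ℤ) • ((D * Y * Y) * (D * D) * (X * X * X * X * D)) +
      (1 : ℤ) • ((D * Y * Y * D * X * X * X * X) * (D * D)) +
      (-6 : ℤ) • ((D * Y * Y * X * X) * (D * D) * (X * X * D)) +
      (-6 : ℤ) • ((X) * (D * D) * (X * Y * D * X * D * X * Y)) +
      (6 : ℤ) • ((X) * (D * D) * (X * Y * D * X * X * D * Y)) +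
      (12 : ℤ) • ((X) * (D * D) * (X * Y * D * X * Y * D * X)) +
      (-12 : ℤ) • ((X) * (D * D) * (X * Y * D * X * Y * X * D)) +
      (6 : ℤ) • ((X) * (D * D) * (X * Y * X * D * D * X * Y)) +
      (-6 : ℤ) • ((X) * (D * D) * (X * Y * X * D * X * D * Y)) +
      (-12 : ℤ) • ((X) * (D * D) * (X * Y * X * D * Y * D * X)) +
      (12 : ℤ) • ((X) * (D * D) * (X * Y * X * D * Y * X * D)) +
      (-6 : ℤ) • ((X) * (D * D) * (X * Y * Y * D * X * D * X)) +
      (6 : ℤ) • ((X) * (D * D) * (X * Y * Y * D * X * X * D)) +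
      (6 : ℤ) • ((X) * (D * D) * (X * Y * Y * X * D * D * X)) +
      (-6 : ℤ) • ((X) * (D * D) * (X * Y * Y * X * D * X * D)) +
      (-6 : ℤ) • ((X * D * X * D * Y * X) * (D * D) * (X * Y)) +
      (-6 : ℤ) • ((X * D * X * D * Y * Y * X) * (D * D) * (X)) +
      (-12 : ℤ) • ((X * D * Y * D * X * X) * (D * D) * (X * Y)) +
      (-12 : ℤ) • ((X * D * Y * D * X * Y * X) * (D * D) * (X)) +
      (-12 : ℤ) • ((X * D * Y * X) * (D * D) * (X * D * X * Y)) +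
      (12 : ℤ) • ((X * D * Y * X) * (D * D) * (X * X * D * Y)) +
      (24 : ℤ) • ((X * D * Y * X) * (D * D) * (X * Y * D * X)) +
      (-24 : ℤ) • ((X * D * Y * X) * (D * D) * (X * Y * X * D)) +
      (12 : ℤ) • ((X * D * Y * X * D * X) * (D * D) * (X * Y)) +
      (12 : ℤ) • ((X * D * Y * X * D * Y * X) * (D * D) * (X)) +
      (-6 : ℤ) • ((Y * D * X * D * X * X) * (D * D) * (X * Y)) +
      (-6 : ℤ) • ((Y * D * X * D * X * Y * X) * (D * D) * (X)) +
      (-6 : ℤ) • ((Y * D * X * X) * (D * D) * (X * D * X * Y)) +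
      (6 : ℤ) • ((Y * D * X * X) * (D * D) * (X * X * D * Y)) +
      (12 : ℤ) • ((Y * D * X * X) * (D * D) * (X * Y * D * X)) +
      (-12 : ℤ) • ((Y * D * X * X) * (D * D) * (X * Y * X * D)) +
      (6 : ℤ) • ((Y * D * X * X * D * X) * (D * D) * (X * Y)) +
      (6 : ℤ) • ((Y * D * X * X * D * Y * X) * (D * D) * (X)) +
      (-6 : ℤ) • ((Y * X) * (D * D) * (X * D * X * D * X * Y)) +
      (6 : ℤ) • ((Y * X) * (D * D) * (X * D * X * X * D * Y)) +
      (12 : ℤ) • ((Y * X) * (D * D) * (X * D * X * Y * D * X)) +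
      (-12 : ℤ) • ((Y * X) * (D * D) * (X * D * X * Y * X * D)) +
      (6 : ℤ) • ((Y * X) * (D * D) * (X * X * D * D * X * Y)) +
      (-6 : ℤ) • ((Y * X) * (D * D) * (X * X * D * X * D * Y)) +
      (-12 : ℤ) • ((Y * X) * (D * D) * (X * X * D * Y * D * X)) +
      (12 : ℤ) • ((Y * X) * (D * D) * (X * X * D * Y * X * D)) +
      (-6 : ℤ) • ((Y * X) * (D * D) * (X * Y * D * X * D * X)) +
      (6 : ℤ) • ((Y * X) * (D * D) * (X * Y * D * X * X * D)) +
      (6 : ℤ) • ((Y * X) * (D * D) * (X * Y * X * D * D * X)) +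
      (-6 : ℤ) • ((Y * X) * (D * D) * (X * Y * X * D * X * D)) +
      (6 : ℤ) • ((Y * X * D * X) * (D * D) * (X * D * X * Y)) +
      (-6 : ℤ) • ((Y * X * D * X) * (D * D) * (X * X * D * Y)) +
      (-12 : ℤ) • ((Y * X * D * X) * (D * D) * (X * Y * D * X)) +
      (12 : ℤ) • ((Y * X * D * X) * (D * D) * (X * Y * X * D)) +
      (-6 : ℤ) • ((Y * X * D * X * D * X) * (D * D) * (X * Y)) +
      (-6 : ℤ) • ((Y * X * D * X * D * Y * X) * (D * D) * (X)) := by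
  subst hZ hadb hYX hD2 hD1 hB4 hA4 hA3 hA2 hA1
  noncomm_ring

section core

private lemma hF1' {Q : Type*} [LieRing Q] (h2 : ∀ q : Q, (2 : ℕ) • q = 0 → q = 0)
    (p : Q) (hp : ∀ t : Q, ⁅p, ⁅p, t⁆⁆ = 0) :
    ∀ m n : Q, ⁅⁅p,m⁆,⁅p,n⁆⁆ = 0 := by
  intro m n
  have e1 : ⁅p, ⁅⁅p,m⁆, n⁆⁆ = ⁅⁅p,m⁆,⁅p,n⁆⁆ := by
    have h := leibniz_lie p ⁅p,m⁆ n
    rw [hp m, zero_lie, zero_add] at h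
    exact h
  have e2 : ⁅p, ⁅⁅p,n⁆, m⁆⁆ = ⁅⁅p,n⁆,⁅p,m⁆⁆ := by
    have h := leibniz_lie p ⁅p,n⁆ m
    rw [hp n, zero_lie, zero_add] at h
    exact h
  apply h2
  have e3 : (2 : ℕ) • ⁅⁅p,m⁆,⁅p,n⁆⁆ = ⁅p, ⁅⁅p,m⁆, n⁆⁆ - ⁅p, ⁅⁅p,n⁆, m⁆⁆ := by
    rw [e1, e2, two_nsmul, ← lie_skew ⁅p,n⁆ ⁅p,m⁆]
    abel
  have e4 : ⁅p, ⁅⁅p,m⁆, n⁆⁆ - ⁅p, ⁅⁅p,n⁆, m⁆⁆ = ⁅p, ⁅p, ⁅m, n⁆⁆⁆ := by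
    rw [← lie_sub]
    congr 1
    rw [leibniz_lie p m n, ← lie_skew ⁅p,n⁆ m]
    abel
  rw [e3, e4, hp]

private lemma hS' {Φ : Type*} [CommRing Φ] {Q : Type*} [LieRing Q] [LieAlgebra Φ Q] (h2 : ∀ q : Q, (2 : ℕ) • q = 0 → q = 0)
    (p : Q) (hp : ∀ t : Q, ⁅p, ⁅p, t⁆⁆ = 0) :
    ∀ m : Q, (ad Φ Q p) * (ad Φ Q m) * (ad Φ Q p) = 0 := by
  intro m
  ext s
  simp only [Module.End.mul_apply, ad_apply, LinearMap.zero_apply]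
  have h := leibniz_lie p m ⁅p,s⁆
  rw [hF1' h2 p hp m s, hp s, lie_zero] at h
  simpa using h

private lemma hDD' {Φ : Type*} [CommRing Φ] {Q : Type*} [LieRing Q] [LieAlgebra Φ Q] (p : Q) (hp : ∀ t : Q, ⁅p, ⁅p, t⁆⁆ = 0) :
    (ad Φ Q p) * (ad Φ Q p) = 0 := by
  ext s
  simp only [Module.End.mul_apply, ad_apply, LinearMap.zero_apply]
  exact hp s

private lemma hadl' {Φ : Type*} [CommRing Φ] {Q : Type*} [LieRing Q] [LieAlgebra Φ Q] (u v : Q) :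
    ad Φ Q ⁅u,v⁆ = ad Φ Q u * ad Φ Q v - ad Φ Q v * ad Φ Q u := by
  ext w
  simp only [LinearMap.sub_apply, Module.End.mul_apply, ad_apply]
  exact lie_lie u v w

private lemma coreA {Φ : Type*} [CommRing Φ] {Q : Type*} [LieRing Q] [LieAlgebra Φ Q] (h2 : ∀ q : Q, (2 : ℕ) • q = 0 → q = 0)
    (p : Q) (hp : ∀ t : Q, ⁅p, ⁅p, t⁆⁆ = 0) (x t : Q) :
    ⁅⁅⁅x,p⁆,⁅⁅x,p⁆,x⁆⁆, ⁅⁅⁅x,p⁆,⁅⁅x,p⁆,x⁆⁆, t⁆⁆ = 0 := by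
  have KEY := keyA (ad Φ Q p) (ad Φ Q x) (ad Φ Q ⁅x,p⁆) (ad Φ Q ⁅x,⁅x,p⁆⁆)
      (ad Φ Q ⁅x,⁅x,⁅x,p⁆⁆⁆) (ad Φ Q ⁅x,⁅x,⁅x,⁅x,p⁆⁆⁆⁆) (ad Φ Q ⁅⁅x,p⁆,⁅⁅x,p⁆,x⁆⁆)
      (hadl' x p) (hadl' x ⁅x,p⁆) (hadl' x ⁅x,⁅x,p⁆⁆) (hadl' x ⁅x,⁅x,⁅x,p⁆⁆⁆)
      (by rw [hadl' ⁅x,p⁆ ⁅⁅x,p⁆,x⁆, hadl' ⁅x,p⁆ x])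
  rw [hS' h2 p hp x, hS' h2 p hp ⁅x,⁅x,⁅x,⁅x,p⁆⁆⁆⁆, hDD' p hp] at KEY
  simp only [zero_mul, mul_zero, smul_zero, add_zero, zero_add] at KEY
  have happ := DFunLike.congr_fun KEY t
  simp only [LinearMap.smul_apply, Module.End.mul_apply, ad_apply, LinearMap.zero_apply] at happ
  apply h2
  rw [two_nsmul]
  rw [two_zsmul] at happ
  exact happ

private lemma coreB {Φ : Type*} [CommRing Φ] {Q : Type*} [LieRing Q] [LieAlgebra Φ Q] (h2 : ∀ q : Q, (2 : ℕ) • q = 0 → q = 0)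
    (h3 : ∀ q : Q, (3 : ℕ) • q = 0 → q = 0)
    (p : Q) (hp : ∀ t : Q, ⁅p, ⁅p, t⁆⁆ = 0) (x y : Q)
    (hb : (⁅⁅x,p⁆,⁅⁅x,p⁆,x⁆⁆ : Q) = 0) (t : Q) :
    ⁅⁅⁅x,p⁆,⁅⁅x,p⁆,y⁆⁆, ⁅⁅⁅x,p⁆,⁅⁅x,p⁆,y⁆⁆, t⁆⁆ = 0 := by
  have hadb0 : ad Φ Q ⁅⁅x,p⁆,⁅⁅x,p⁆,x⁆⁆ = 0 := by
    rw [hb]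
    exact map_zero _
  have KEY := keyB (ad Φ Q p) (ad Φ Q x) (ad Φ Q y) (ad Φ Q ⁅x,p⁆) (ad Φ Q ⁅x,⁅x,p⁆⁆)
      (ad Φ Q ⁅x,⁅x,⁅x,p⁆⁆⁆) (ad Φ Q ⁅x,⁅x,⁅x,⁅x,p⁆⁆⁆⁆)
      (ad Φ Q ⁅y,⁅x,⁅x,⁅x,p⁆⁆⁆⁆) (ad Φ Q ⁅y,⁅x,⁅x,p⁆⁆⁆) (ad Φ Q ⁅y,⁅y,⁅x,⁅x,p⁆⁆⁆⁆)
      (ad Φ Q ⁅y,x⁆) (ad Φ Q ⁅⁅x,p⁆,⁅⁅x,p⁆,x⁆⁆) (ad Φ Q ⁅⁅x,p⁆,⁅⁅x,p⁆,y⁆⁆)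
      (hadl' x p) (hadl' x ⁅x,p⁆) (hadl' x ⁅x,⁅x,p⁆⁆) (hadl' x ⁅x,⁅x,⁅x,p⁆⁆⁆)
      (hadl' y ⁅x,⁅x,⁅x,p⁆⁆⁆) (hadl' y ⁅x,⁅x,p⁆⁆)
      (by rw [hadl' y ⁅y,⁅x,⁅x,p⁆⁆⁆, hadl' y ⁅x,⁅x,p⁆⁆])
      (hadl' y x)
      (by rw [hadl' ⁅x,p⁆ ⁅⁅x,p⁆,x⁆, hadl' ⁅x,p⁆ x])
      (by rw [hadl' ⁅x,p⁆ ⁅⁅x,p⁆,y⁆, hadl' ⁅x,p⁆ y])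
  rw [hS' h2 p hp x, hS' h2 p hp y, hS' h2 p hp ⁅y,x⁆, hS' h2 p hp ⁅x,⁅x,⁅x,⁅x,p⁆⁆⁆⁆,
      hS' h2 p hp ⁅y,⁅x,⁅x,⁅x,p⁆⁆⁆⁆, hS' h2 p hp ⁅y,⁅y,⁅x,⁅x,p⁆⁆⁆⁆, hDD' p hp, hadb0] at KEY
  simp only [zero_mul, mul_zero, smul_zero, add_zero, zero_add] at KEY
  have happ := DFunLike.congr_fun KEY t
  simp only [LinearMap.smul_apply, Module.End.mul_apply, ad_apply, LinearMap.zero_apply] at happ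
  apply h3
  apply h2
  rw [smul_smul]
  have h6 : (6 : ℕ) • (⁅⁅⁅x,p⁆,⁅⁅x,p⁆,y⁆⁆, ⁅⁅⁅x,p⁆,⁅⁅x,p⁆,y⁆⁆, t⁆⁆ : Q) = 0 := by
    rw [← natCast_zsmul]
    exact_mod_cast happ
  exact h6

end core

/-- Let `Φ` be 2- and 3-torsion free (on the modules under
consideration) and let `Q = ⊕_{σ∈G} Q_σ` be a `G`-graded Lie algebra over `Φ`
which is a graded weak algebra of quotients of a graded subalgebra `L`.
If `L` is graded strongly nondegenerate, then `Q` is graded strongly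
nondegenerate. -/
theorem graded_strongly_nondegenerate_of_graded_weak_quotients
    {Φ : Type*} [CommRing Φ] {G : Type*} [CommGroup G] [DecidableEq G]
    {Q : Type*} [LieRing Q] [LieAlgebra Φ Q]
    (h2 : ∀ q : Q, (2 : ℕ) • q = 0 → q = 0)
    (h3 : ∀ q : Q, (3 : ℕ) • q = 0 → q = 0)
    (𝒜 : G → Submodule Φ Q) [DirectSum.Decomposition 𝒜]
    (hbracket : ∀ (σ τ : G) (x y : Q), x ∈ 𝒜 σ → y ∈ 𝒜 τ → ⁅x, y⁆ ∈ 𝒜 (σ * τ))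
    (L : LieSubalgebra Φ Q)
    (hLgr : ∀ x ∈ L, ∀ σ : G, (DirectSum.decompose 𝒜 x σ : Q) ∈ L)
    (hweak : ∀ (σ : G) (p : Q), p ∈ 𝒜 σ → p ≠ 0 →
      ∃ (α : G) (x : Q), x ∈ 𝒜 α ∧ x ∈ L ∧ ⁅x, p⁆ ≠ 0 ∧ ⁅x, p⁆ ∈ L)
    (hLnd : ∀ (σ : G) (x : Q), x ∈ L → x ∈ 𝒜 σ →
      (∀ y ∈ L, ⁅x, ⁅x, y⁆⁆ = 0) → x = 0) :
    ∀ (σ : G) (x : Q), x ∈ 𝒜 σ → (∀ y : Q, ⁅x, ⁅x, y⁆⁆ = 0) → x = 0 := by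
  intro σ p hpA hpsand
  by_contra hp0
  obtain ⟨α, x, hxA, hxL, haNe, haL⟩ := hweak σ p hpA hp0
  have haA : (⁅x,p⁆ : Q) ∈ 𝒜 (α * σ) := hbracket α σ x p hxA hpA
  -- b := ⁅a,⁅a,x⁆⁆ is a homogeneous element of L which is an absolute zero divisor of Q
  have hbL : (⁅⁅x,p⁆,⁅⁅x,p⁆,x⁆⁆ : Q) ∈ L := L.lie_mem haL (L.lie_mem haL hxL)
  have hbA : (⁅⁅x,p⁆,⁅⁅x,p⁆,x⁆⁆ : Q) ∈ 𝒜 ((α*σ) * ((α*σ) * α)) :=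
    hbracket _ _ _ _ haA (hbracket _ _ _ _ haA hxA)
  have hb0 : (⁅⁅x,p⁆,⁅⁅x,p⁆,x⁆⁆ : Q) = 0 :=
    hLnd _ _ hbL hbA (fun w _ => coreA (Φ := Φ) h2 p hpsand x w)
  -- every homogeneous y ∈ L gives ⁅a,⁅a,y⁆⁆ = 0
  have hzero : ∀ y ∈ L, (⁅⁅x,p⁆,⁅⁅x,p⁆,y⁆⁆ : Q) = 0 := by
    intro y hyL
    have hcomp : ∀ τ : G, (⁅⁅x,p⁆,⁅⁅x,p⁆,(DirectSum.decompose 𝒜 y τ : Q)⁆⁆ : Q) = 0 := by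
      intro τ
      have hyτL : ((DirectSum.decompose 𝒜 y τ : 𝒜 τ) : Q) ∈ L := hLgr y hyL τ
      have hyτA : ((DirectSum.decompose 𝒜 y τ : 𝒜 τ) : Q) ∈ 𝒜 τ := SetLike.coe_mem _
      have hzL : (⁅⁅x,p⁆,⁅⁅x,p⁆,((DirectSum.decompose 𝒜 y τ : 𝒜 τ) : Q)⁆⁆ : Q) ∈ L :=
        L.lie_mem haL (L.lie_mem haL hyτL)
      have hzA : (⁅⁅x,p⁆,⁅⁅x,p⁆,((DirectSum.decompose 𝒜 y τ : 𝒜 τ) : Q)⁆⁆ : Q) ∈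
          𝒜 ((α*σ) * ((α*σ) * τ)) := hbracket _ _ _ _ haA (hbracket _ _ _ _ haA hyτA)
      exact hLnd _ _ hzL hzA
        (fun w _ => coreB (Φ := Φ) h2 h3 p hpsand x ((DirectSum.decompose 𝒜 y τ : 𝒜 τ) : Q) hb0 w)
    classical
    conv_lhs => rw [← DirectSum.sum_support_decompose 𝒜 y]
    simp only [← LieAlgebra.ad_apply (R := Φ)]
    rw [map_sum, map_sum]
    simp only [LieAlgebra.ad_apply]
    simp only [hcomp, Finset.sum_const_zero]
  exact haNe (hLnd _ _ haL haA hzero)
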